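/- arXiv:1105.0553 — 3 statements merged into one kernel-verified Lean document; each statement's English description precedes it below -/
import Mathlib

section
/- Loewner's torus inequality with isosystolic defect: for any Riemannian metric g = f² g₀ on T², where g₀ is the unit-area flat metric ℝ²/(ℤτ + ℤ1)/√Im(τ) in the conformal class of g with τ in the standard fundamental domain, area(g) − Im(τ)·sys(g)² ≥ Var(f). -/
/-- Euclidean norm on `ℝ × ℝ`. -/
noncomputable def eNorm (p : ℝ × ℝ) : ℝ := Real.sqrt (p.1 ^ 2 + p.2 ^ 2)

/-- Integral of a doubly periodic function over the fundamental domain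
`{s v₁ + t v₂ : s, t ∈ [0,1]}` of the lattice `ℤv₁ + ℤv₂` (of unit coarea). -/
noncomputable def torusInt (F : ℝ × ℝ → ℝ) (v₁ v₂ : ℝ × ℝ) : ℝ :=
  ∫ s in (0:ℝ)..1, ∫ t in (0:ℝ)..1, F (s • v₁ + t • v₂)

/-- Area of the torus with metric `f²(dx² + dy²)`. -/
noncomputable def torusArea (f : ℝ × ℝ → ℝ) (v₁ v₂ : ℝ × ℝ) : ℝ :=
  torusInt (fun p => (f p) ^ 2) v₁ v₂

/-- Mean of the conformal factor over the flat probability measure. -/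
noncomputable def torusMean (f : ℝ × ℝ → ℝ) (v₁ v₂ : ℝ × ℝ) : ℝ :=
  torusInt f v₁ v₂

/-- Variance of the conformal factor over the flat probability measure. -/
noncomputable def torusVar (f : ℝ × ℝ → ℝ) (v₁ v₂ : ℝ × ℝ) : ℝ :=
  torusInt (fun p => (f p - torusMean f v₁ v₂) ^ 2) v₁ v₂

/-- The systole of the torus `ℝ²/(ℤv₁ + ℤv₂)` with metric `f²(dx² + dy²)`:
the least `f`-length of a `C¹` loop which is noncontractible, i.e. lifts to a
path whose endpoints differ by a nonzero lattice vector. -/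
noncomputable def torusSys (f : ℝ × ℝ → ℝ) (v₁ v₂ : ℝ × ℝ) : ℝ :=
  sInf {ℓ : ℝ | ∃ γ : ℝ → ℝ × ℝ, ContDiff ℝ 1 γ ∧
    (∃ m n : ℤ, γ 1 - γ 0 = m • v₁ + n • v₂ ∧ ¬(m = 0 ∧ n = 0)) ∧
    ℓ = ∫ t in (0:ℝ)..1, f (γ t) * eNorm (deriv γ t)}

open MeasureTheory intervalIntegral

lemma swap01 (F : ℝ → ℝ → ℝ) (hF : Continuous (Function.uncurry F)) :
    ∫ s in (0:ℝ)..1, ∫ t in (0:ℝ)..1, F s t = ∫ t in (0:ℝ)..1, ∫ s in (0:ℝ)..1, F s t := by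
  have h01 : (0:ℝ) ≤ 1 := zero_le_one
  have hint : Integrable (Function.uncurry F)
      ((volume.restrict (Set.Ioc (0:ℝ) 1)).prod (volume.restrict (Set.Ioc (0:ℝ) 1))) := by
    rw [Measure.prod_restrict, ← Measure.volume_eq_prod]
    apply (hF.continuousOn.integrableOn_compact ((isCompact_Icc).prod isCompact_Icc)).mono_set
    exact Set.prod_mono Set.Ioc_subset_Icc_self Set.Ioc_subset_Icc_self
  simpa only [intervalIntegral.integral_of_le h01] using
    MeasureTheory.integral_integral_swap hint

lemma expand_sq (G : ℝ → ℝ → ℝ) (hG : Continuous (Function.uncurry G)) (m : ℝ) :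
    ∫ s in (0:ℝ)..1, ∫ t in (0:ℝ)..1, (G s t - m)^2
    = (∫ s in (0:ℝ)..1, ∫ t in (0:ℝ)..1, (G s t)^2)
      - 2*m*(∫ s in (0:ℝ)..1, ∫ t in (0:ℝ)..1, G s t) + m^2 := by
  have hGs : ∀ s : ℝ, Continuous fun t => G s t := fun s =>
    hG.comp (Continuous.prodMk_right s)
  have hinner : ∀ s : ℝ, (∫ t in (0:ℝ)..1, (G s t - m)^2)
      = (∫ t in (0:ℝ)..1, (G s t)^2) - 2*m*(∫ t in (0:ℝ)..1, G s t) + m^2 := by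
    intro s
    have h1 : IntervalIntegrable (fun t => (G s t)^2) volume 0 1 :=
      ((hGs s).pow 2).intervalIntegrable 0 1
    have h2 : IntervalIntegrable (fun t => 2*m*(G s t)) volume 0 1 :=
      (continuous_const.mul (hGs s)).intervalIntegrable 0 1
    have h3 : IntervalIntegrable (fun _ : ℝ => m^2) volume 0 1 :=
      intervalIntegrable_const
    have : (fun t => (G s t - m)^2)
        = fun t => ((G s t)^2 - 2*m*(G s t)) + m^2 := by funext t; ring
    rw [this, intervalIntegral.integral_add (h1.sub h2) h3,
      intervalIntegral.integral_sub h1 h2, intervalIntegral.integral_const_mul]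
    simp
  simp_rw [hinner]
  have hP1 : Continuous fun s => ∫ t in (0:ℝ)..1, (G s t)^2 :=
    intervalIntegral.continuous_parametric_intervalIntegral_of_continuous'
      (by exact (hG.pow 2)) 0 1
  have hP2 : Continuous fun s => ∫ t in (0:ℝ)..1, G s t :=
    intervalIntegral.continuous_parametric_intervalIntegral_of_continuous' hG 0 1
  rw [intervalIntegral.integral_add
      ((hP1.intervalIntegrable 0 1).sub ((show Continuous fun s => 2*m*∫ t in (0:ℝ)..1, G s t from continuous_const.mul hP2).intervalIntegrable 0 1))
      intervalIntegrable_const,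
    intervalIntegral.integral_sub (hP1.intervalIntegrable 0 1)
      ((show Continuous fun s => 2*m*∫ t in (0:ℝ)..1, G s t from continuous_const.mul hP2).intervalIntegrable 0 1),
    intervalIntegral.integral_const_mul]
  simp


/-- Loewner's torus inequality with isosystolic defect:
`area(g) − Im(τ) · sys(g)² ≥ Var(f)` for `g = f² g₀`, where `g₀` is the
unit-area flat metric with deck lattice spanned by `(1,0)/√Im τ` and
`(τ₁,τ₂)/√Im τ`, `τ` in the standard fundamental domain. -/
theorem loewner_with_defect (τ₁ τ₂ : ℝ) (hτ₂ : 0 < τ₂)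
    (hfund₁ : 1 ≤ τ₁ ^ 2 + τ₂ ^ 2) (hfund₂ : |τ₁| ≤ 1 / 2)
    (v₁ v₂ : ℝ × ℝ)
    (hv₁ : v₁ = (Real.sqrt τ₂)⁻¹ • ((1:ℝ), (0:ℝ)))
    (hv₂ : v₂ = (Real.sqrt τ₂)⁻¹ • (τ₁, τ₂))
    (f : ℝ × ℝ → ℝ) (hf : Continuous f) (hpos : ∀ p, 0 < f p)
    (hper₁ : ∀ p, f (p + v₁) = f p) (hper₂ : ∀ p, f (p + v₂) = f p) :
    torusArea f v₁ v₂ - τ₂ * (torusSys f v₁ v₂) ^ 2 ≥ torusVar f v₁ v₂ := by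
  set σ : ℝ := Real.sqrt τ₂ with hσdef
  have hσ : 0 < σ := Real.sqrt_pos.mpr hτ₂
  have hσ2 : σ ^ 2 = τ₂ := Real.sq_sqrt hτ₂.le
  -- the map (s,t) ↦ f (s•v₁ + t•v₂) and its continuity
  set G : ℝ → ℝ → ℝ := fun s t => f (s • v₁ + t • v₂) with hGdef
  have hG : Continuous (Function.uncurry G) := by
    apply hf.comp
    exact (continuous_fst.smul continuous_const).add (continuous_snd.smul continuous_const)
  set m := torusMean f v₁ v₂ with hm
  -- Step 1: torusVar = torusArea - m²
  have hmean : m = ∫ s in (0:ℝ)..1, ∫ t in (0:ℝ)..1, G s t := rfl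
  have hVar : torusVar f v₁ v₂ = torusArea f v₁ v₂ - m ^ 2 := by
    have := expand_sq G hG m
    rw [← hmean] at this
    show (∫ s in (0:ℝ)..1, ∫ t in (0:ℝ)..1, (G s t - m)^2) = _
    rw [this]
    show _ = (∫ s in (0:ℝ)..1, ∫ t in (0:ℝ)..1, (G s t)^2) - m^2
    ring
  -- basic facts about the systole set
  set S := {ℓ : ℝ | ∃ γ : ℝ → ℝ × ℝ, ContDiff ℝ 1 γ ∧
    (∃ m n : ℤ, γ 1 - γ 0 = m • v₁ + n • v₂ ∧ ¬(m = 0 ∧ n = 0)) ∧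
    ℓ = ∫ t in (0:ℝ)..1, f (γ t) * eNorm (deriv γ t)} with hS
  have hSys : torusSys f v₁ v₂ = sInf S := rfl
  have hSnonneg : ∀ ℓ ∈ S, 0 ≤ ℓ := by
    rintro ℓ ⟨γ, -, -, rfl⟩
    exact intervalIntegral.integral_nonneg zero_le_one
      (fun t _ => mul_nonneg (hpos _).le (Real.sqrt_nonneg _))
  have hbdd : BddBelow S := ⟨0, fun ℓ hℓ => hSnonneg ℓ hℓ⟩
  have hsys0 : 0 ≤ torusSys f v₁ v₂ := by
    rw [hSys]; exact Real.sInf_nonneg hSnonneg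
  have heN : eNorm v₁ = σ⁻¹ := by
    rw [hv₁]
    show Real.sqrt ((σ⁻¹ * 1) ^ 2 + (σ⁻¹ * 0) ^ 2) = σ⁻¹
    rw [mul_one, mul_zero]
    simpa using Real.sqrt_sq (inv_nonneg.mpr hσ.le)
  -- Step 2: for each u, sys ≤ σ⁻¹ ∫ f(s v₁ + u v₂) ds
  have hkey : ∀ u : ℝ, σ * torusSys f v₁ v₂ ≤ ∫ s in (0:ℝ)..1, G s u := by
    intro u
    set γ : ℝ → ℝ × ℝ := fun t => u • v₂ + t • v₁ with hγ
    have hderiv : ∀ t : ℝ, deriv γ t = v₁ := by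
      intro t
      have : HasDerivAt γ ((1:ℝ) • v₁) t :=
        HasDerivAt.const_add (u • v₂) ((hasDerivAt_id t).smul_const v₁)
      simpa using this.deriv
    have hmem : (σ⁻¹ * ∫ t in (0:ℝ)..1, f (γ t)) ∈ S := by
      refine ⟨γ, ?_, ⟨1, 0, by simp [hγ], by simp⟩, ?_⟩
      · exact contDiff_const.add (contDiff_id.smul contDiff_const)
      · simp_rw [hderiv, heN, intervalIntegral.integral_mul_const]
        ring
    have h1 : torusSys f v₁ v₂ ≤ σ⁻¹ * ∫ t in (0:ℝ)..1, f (γ t) := by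
      rw [hSys]; exact csInf_le hbdd hmem
    have h2 : (∫ t in (0:ℝ)..1, f (γ t)) = ∫ s in (0:ℝ)..1, G s u := by
      apply intervalIntegral.integral_congr
      intro t _
      simp only [hγ, hGdef, add_comm]
    calc σ * torusSys f v₁ v₂ ≤ σ * (σ⁻¹ * ∫ t in (0:ℝ)..1, f (γ t)) :=
          mul_le_mul_of_nonneg_left h1 hσ.le
      _ = ∫ t in (0:ℝ)..1, f (γ t) := by field_simp
      _ = _ := h2
  -- Step 3: average over u, using Fubini
  have hswap : m = ∫ u in (0:ℝ)..1, ∫ s in (0:ℝ)..1, G s u := by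
    rw [hmean]; exact swap01 G hG
  have hinnercont : Continuous fun u => ∫ s in (0:ℝ)..1, G s u := by
    apply intervalIntegral.continuous_parametric_intervalIntegral_of_continuous'
      (f := fun u s => G s u)
    exact hG.comp continuous_swap
  have havg : σ * torusSys f v₁ v₂ ≤ m := by
    rw [hswap]
    have := intervalIntegral.integral_mono_on (μ := volume) zero_le_one
      (_root_.intervalIntegrable_const (c := σ * torusSys f v₁ v₂))
      (hinnercont.intervalIntegrable 0 1)
      (fun u _ => hkey u)
    simpa using this
  -- conclude
  have hfin : τ₂ * torusSys f v₁ v₂ ^ 2 ≤ m ^ 2 := by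
    have h0 : 0 ≤ σ * torusSys f v₁ v₂ := mul_nonneg hσ.le hsys0
    nlinarith [mul_self_le_mul_self h0 havg]
  linarith [hVar, hfin]
end

section
/- Loewner's torus inequality with defect, Eisenstein bound: area(g) − (√3/2)·sys(g)² ≥ Var(f) for any metric g = f² g₀ on T² with g₀ flat of unit area in the conformal class of g. -/
/-- Fubini for iterated interval integrals of continuous functions on `[0,1]²`. -/
lemma loewnerAux_swap (g : ℝ → ℝ → ℝ) (hg : Continuous fun p : ℝ × ℝ => g p.1 p.2) :
    ∫ s in (0:ℝ)..1, ∫ t in (0:ℝ)..1, g s t = ∫ t in (0:ℝ)..1, ∫ s in (0:ℝ)..1, g s t := by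
  simp only [intervalIntegral.integral_of_le (zero_le_one (α := ℝ))]
  apply MeasureTheory.integral_integral_swap
  rw [Function.uncurry_def, MeasureTheory.Measure.prod_restrict]
  exact (hg.continuousOn.integrableOn_compact (isCompact_Icc.prod isCompact_Icc)).mono_set
    (Set.prod_mono Set.Ioc_subset_Icc_self Set.Ioc_subset_Icc_self)

/-- The variance is the area minus the square of the mean. -/
lemma loewnerAux_var_eq (f : ℝ × ℝ → ℝ) (hf : Continuous f) (v₁ v₂ : ℝ × ℝ) :
    torusVar f v₁ v₂ = torusArea f v₁ v₂ - (torusMean f v₁ v₂) ^ 2 := by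
  set m := torusMean f v₁ v₂ with hm
  have hc1 : ∀ s : ℝ, Continuous fun t : ℝ => f (s • v₁ + t • v₂) := by
    intro s; fun_prop
  have inner : ∀ s : ℝ, (∫ t in (0:ℝ)..1, (f (s • v₁ + t • v₂) - m) ^ 2)
      = (∫ t in (0:ℝ)..1, f (s • v₁ + t • v₂) ^ 2)
        - 2 * m * (∫ t in (0:ℝ)..1, f (s • v₁ + t • v₂)) + m ^ 2 := by
    intro s
    have h1 : IntervalIntegrable (fun t : ℝ => f (s • v₁ + t • v₂) ^ 2)
        MeasureTheory.volume 0 1 := ((hc1 s).pow 2).intervalIntegrable 0 1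
    have h2 : IntervalIntegrable (fun t : ℝ => 2 * m * f (s • v₁ + t • v₂))
        MeasureTheory.volume 0 1 := (continuous_const.mul (hc1 s)).intervalIntegrable 0 1
    have h3 : IntervalIntegrable (fun _ : ℝ => m ^ 2) MeasureTheory.volume 0 1 :=
      intervalIntegrable_const
    have : (fun t : ℝ => (f (s • v₁ + t • v₂) - m) ^ 2)
        = fun t : ℝ => (f (s • v₁ + t • v₂) ^ 2 - 2 * m * f (s • v₁ + t • v₂)) + m ^ 2 := by
      funext t; ring
    rw [this, intervalIntegral.integral_add (h1.sub h2) h3,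
      intervalIntegral.integral_sub h1 h2, intervalIntegral.integral_const,
      intervalIntegral.integral_const_mul]
    simp
  have hA : Continuous fun s : ℝ => ∫ t in (0:ℝ)..1, f (s • v₁ + t • v₂) ^ 2 := by
    apply intervalIntegral.continuous_parametric_intervalIntegral_of_continuous'
    fun_prop
  have hB : Continuous fun s : ℝ => ∫ t in (0:ℝ)..1, f (s • v₁ + t • v₂) := by
    apply intervalIntegral.continuous_parametric_intervalIntegral_of_continuous'
    fun_prop
  have : torusVar f v₁ v₂ = ∫ s in (0:ℝ)..1,
      ((∫ t in (0:ℝ)..1, f (s • v₁ + t • v₂) ^ 2)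
        - 2 * m * (∫ t in (0:ℝ)..1, f (s • v₁ + t • v₂)) + m ^ 2) := by
    rw [torusVar, torusInt]
    exact intervalIntegral.integral_congr fun s _ => inner s
  rw [this, intervalIntegral.integral_add
      ((hA.intervalIntegrable 0 1).sub (show IntervalIntegrable (fun s : ℝ => 2 * m * ∫ t in (0:ℝ)..1, f (s • v₁ + t • v₂)) MeasureTheory.volume 0 1 from (continuous_const.mul hB).intervalIntegrable 0 1))
      intervalIntegrable_const,
    intervalIntegral.integral_sub (hA.intervalIntegrable 0 1)
      (show IntervalIntegrable (fun s : ℝ => 2 * m * ∫ t in (0:ℝ)..1, f (s • v₁ + t • v₂)) MeasureTheory.volume 0 1 from (continuous_const.mul hB).intervalIntegrable 0 1),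
    intervalIntegral.integral_const_mul, intervalIntegral.integral_const]
  have hmean : (∫ s in (0:ℝ)..1, ∫ t in (0:ℝ)..1, f (s • v₁ + t • v₂)) = m := rfl
  rw [hmean]
  rw [torusArea, torusInt]
  norm_num
  ring

/-- The systole is at most `|v₁|` times the mean of the conformal factor. -/
lemma loewnerAux_sys_le (f : ℝ × ℝ → ℝ) (hf : Continuous f) (hpos : ∀ p, 0 < f p)
    (v₁ v₂ : ℝ × ℝ) :
    torusSys f v₁ v₂ ≤ eNorm v₁ * torusMean f v₁ v₂ := by
  set c₀ := eNorm v₁ with hc₀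
  set L : ℝ → ℝ := fun u => ∫ t in (0:ℝ)..1, f (t • v₁ + u • v₂) * c₀ with hL
  have hLc : Continuous L := by
    apply intervalIntegral.continuous_parametric_intervalIntegral_of_continuous'
    fun_prop
  obtain ⟨u₀, hu₀, hmin⟩ := isCompact_Icc.exists_isMinOn (Set.nonempty_Icc.mpr zero_le_one)
    hLc.continuousOn (s := Set.Icc (0:ℝ) 1)
  have hderiv : ∀ t : ℝ, deriv (fun t : ℝ => t • v₁ + u₀ • v₂) t = v₁ := by
    intro t
    have : HasDerivAt (fun t : ℝ => t • v₁ + u₀ • v₂) ((1:ℝ) • v₁) t :=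
      ((hasDerivAt_id t).smul_const v₁).add_const (u₀ • v₂)
    simpa using this.deriv
  have hmem : L u₀ ∈ {ℓ : ℝ | ∃ γ : ℝ → ℝ × ℝ, ContDiff ℝ 1 γ ∧
      (∃ m n : ℤ, γ 1 - γ 0 = m • v₁ + n • v₂ ∧ ¬(m = 0 ∧ n = 0)) ∧
      ℓ = ∫ t in (0:ℝ)..1, f (γ t) * eNorm (deriv γ t)} := by
    refine ⟨fun t : ℝ => t • v₁ + u₀ • v₂, ?_, ⟨1, 0, by simp, by simp⟩, ?_⟩
    · exact (contDiff_id.smul contDiff_const).add contDiff_const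
    · refine intervalIntegral.integral_congr fun t _ => ?_
      rw [hderiv t]
  have hbdd : BddBelow {ℓ : ℝ | ∃ γ : ℝ → ℝ × ℝ, ContDiff ℝ 1 γ ∧
      (∃ m n : ℤ, γ 1 - γ 0 = m • v₁ + n • v₂ ∧ ¬(m = 0 ∧ n = 0)) ∧
      ℓ = ∫ t in (0:ℝ)..1, f (γ t) * eNorm (deriv γ t)} := by
    refine ⟨0, fun ℓ hℓ => ?_⟩
    obtain ⟨γ, -, -, rfl⟩ := hℓ
    exact intervalIntegral.integral_nonneg zero_le_one
      (fun t _ => mul_nonneg (hpos _).le (Real.sqrt_nonneg _))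
  have h1 : torusSys f v₁ v₂ ≤ L u₀ := csInf_le hbdd hmem
  have h2 : L u₀ ≤ ∫ u in (0:ℝ)..1, L u := by
    have : (L u₀) = ∫ _ in (0:ℝ)..1, L u₀ := by simp
    rw [this]
    exact intervalIntegral.integral_mono_on zero_le_one intervalIntegrable_const
      (hLc.intervalIntegrable 0 1) (fun u hu => hmin hu)
  have h3 : (∫ u in (0:ℝ)..1, L u) = eNorm v₁ * torusMean f v₁ v₂ := by
    have : ∀ u : ℝ, L u = (∫ t in (0:ℝ)..1, f (t • v₁ + u • v₂)) * c₀ := fun u =>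
      intervalIntegral.integral_mul_const _ _
    rw [intervalIntegral.integral_congr (fun u _ => this u),
      intervalIntegral.integral_mul_const,
      loewnerAux_swap (fun u t => f (t • v₁ + u • v₂)) (by fun_prop)]
    rw [torusMean, torusInt, mul_comm]
  calc torusSys f v₁ v₂ ≤ L u₀ := h1
    _ ≤ _ := h2
    _ = _ := h3

/-- Loewner's torus inequality with defect, Eisenstein bound:
`area(g) − (√3/2) · sys(g)² ≥ Var(f)`. -/
theorem loewner_with_defect_eisenstein (τ₁ τ₂ : ℝ) (hτ₂ : 0 < τ₂)
    (hfund₁ : 1 ≤ τ₁ ^ 2 + τ₂ ^ 2) (hfund₂ : |τ₁| ≤ 1 / 2)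
    (v₁ v₂ : ℝ × ℝ)
    (hv₁ : v₁ = (Real.sqrt τ₂)⁻¹ • ((1:ℝ), (0:ℝ)))
    (hv₂ : v₂ = (Real.sqrt τ₂)⁻¹ • (τ₁, τ₂))
    (f : ℝ × ℝ → ℝ) (hf : Continuous f) (hpos : ∀ p, 0 < f p)
    (hper₁ : ∀ p, f (p + v₁) = f p) (hper₂ : ∀ p, f (p + v₂) = f p) :
    torusArea f v₁ v₂ - (Real.sqrt 3 / 2) * (torusSys f v₁ v₂) ^ 2 ≥
      torusVar f v₁ v₂ := by
  have hst : 0 < Real.sqrt τ₂ := Real.sqrt_pos.mpr hτ₂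
  have hnorm : eNorm v₁ = (Real.sqrt τ₂)⁻¹ := by
    rw [hv₁]
    simp only [eNorm, Prod.smul_mk, smul_eq_mul, mul_one, mul_zero]
    rw [show ((Real.sqrt τ₂)⁻¹) ^ 2 + (0:ℝ) ^ 2 = ((Real.sqrt τ₂)⁻¹) ^ 2 by ring]
    exact Real.sqrt_sq (by positivity)
  have hsys := loewnerAux_sys_le f hf hpos v₁ v₂
  rw [hnorm] at hsys
  have hsys0 : 0 ≤ torusSys f v₁ v₂ := by
    apply Real.sInf_nonneg
    rintro ℓ ⟨γ, -, -, rfl⟩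
    exact intervalIntegral.integral_nonneg zero_le_one
      (fun t _ => mul_nonneg (hpos _).le (Real.sqrt_nonneg _))
  rw [ge_iff_le, loewnerAux_var_eq f hf v₁ v₂]
  set S := torusSys f v₁ v₂
  set M := torusMean f v₁ v₂
  -- it suffices to show (√3/2) S² ≤ M²
  have hτ₂' : Real.sqrt 3 / 2 ≤ τ₂ := by
    have h3 : Real.sqrt 3 ^ 2 = 3 := Real.sq_sqrt (by norm_num)
    have h3' : 0 ≤ Real.sqrt 3 := Real.sqrt_nonneg 3
    have hτ₁ : τ₁ ^ 2 ≤ 1 / 4 := by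
      have := abs_le.mp hfund₂
      nlinarith [this.1, this.2]
    nlinarith [sq_nonneg (τ₂ - Real.sqrt 3 / 2)]
  have hSsq : S ^ 2 ≤ τ₂⁻¹ * M ^ 2 := by
    have h1 : S ^ 2 ≤ ((Real.sqrt τ₂)⁻¹ * M) ^ 2 := by
      apply pow_le_pow_left₀ hsys0 hsys 2
    have h2 : ((Real.sqrt τ₂)⁻¹ * M) ^ 2 = τ₂⁻¹ * M ^ 2 := by
      rw [mul_pow, ← Real.sqrt_inv, Real.sq_sqrt (by positivity)]
    linarith [h1, h2.le, h2.ge]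
  have key : Real.sqrt 3 / 2 * S ^ 2 ≤ M ^ 2 := by
    have h3' : 0 < Real.sqrt 3 := Real.sqrt_pos.mpr (by norm_num)
    have hM2 : 0 ≤ M ^ 2 := sq_nonneg M
    have : Real.sqrt 3 / 2 * S ^ 2 ≤ Real.sqrt 3 / 2 * (τ₂⁻¹ * M ^ 2) := by
      apply mul_le_mul_of_nonneg_left hSsq (by positivity)
    calc Real.sqrt 3 / 2 * S ^ 2 ≤ Real.sqrt 3 / 2 * (τ₂⁻¹ * M ^ 2) := this
      _ = (Real.sqrt 3 / 2 * τ₂⁻¹) * M ^ 2 := by ring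
      _ ≤ 1 * M ^ 2 := by
          apply mul_le_mul_of_nonneg_right _ hM2
          calc Real.sqrt 3 / 2 * τ₂⁻¹ ≤ τ₂ * τ₂⁻¹ :=
                mul_le_mul_of_nonneg_right hτ₂' (by positivity)
            _ = 1 := mul_inv_cancel₀ hτ₂.ne'
      _ = M ^ 2 := one_mul _
  linarith
end

section
/- For any lattice L ⊂ ℝ² of unit covolume, the first successive minimum satisfies λ₁(L)² ≤ 2/√3, with equality for the (rescaled) Eisenstein lattice ℤ·1 + ℤ·e^{iπ/3}. -/
/-- First successive minimum of the lattice `ℤv₁ + ℤv₂` in the Euclidean plane. -/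
noncomputable def lambdaOne (v₁ v₂ : ℝ × ℝ) : ℝ :=
  sInf {x : ℝ | ∃ m n : ℤ, ¬(m = 0 ∧ n = 0) ∧ x = eNorm (m • v₁ + n • v₂)}

lemma zsmul_coords (m n : ℤ) (v₁ v₂ : ℝ × ℝ) :
    m • v₁ + n • v₂ = ((m * v₁.1 + n * v₂.1 : ℝ), (m * v₁.2 + n * v₂.2 : ℝ)) := by
  simp [Prod.ext_iff, zsmul_eq_mul]

lemma eNorm_coords (m n : ℤ) (v₁ v₂ : ℝ × ℝ) :
    eNorm (m • v₁ + n • v₂)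
      = Real.sqrt (((m : ℝ) * v₁.1 + n * v₂.1) ^ 2 + ((m : ℝ) * v₁.2 + n * v₂.2) ^ 2) := by
  rw [zsmul_coords, eNorm]

lemma final_aux (A C L b : ℝ) (key : A * C - b = 1) (hBsq : b ≤ A ^ 2 / 4)
    (hAL : A * L ≤ A * C) (hprod : 0 ≤ 4 * (A * L) - A ^ 2 - 3 * L ^ 2)
    (hL2 : 4 / 3 < L ^ 2) : False := by linarith

lemma sqrt3_lt_two : Real.sqrt 3 < 2 := by
  nlinarith [Real.sq_sqrt (show (0:ℝ) ≤ 3 by norm_num), Real.sqrt_nonneg 3]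

lemma sqrt3_pos : (0:ℝ) < Real.sqrt 3 := Real.sqrt_pos.mpr (by norm_num)

lemma one_lt_gamma : (1:ℝ) < 2 / Real.sqrt 3 :=
  (one_lt_div sqrt3_pos).mpr sqrt3_lt_two

lemma gamma_sq : (2 / Real.sqrt 3) ^ 2 = 4 / 3 := by
  rw [div_pow, Real.sq_sqrt (by norm_num : (0:ℝ) ≤ 3)]
  norm_num

section Part1

variable (v₁ v₂ : ℝ × ℝ)

/-- squared norm of `m v₁ + n v₂`, as a polynomial. -/
noncomputable def Nf (m n : ℤ) : ℝ :=
  ((m : ℝ) * v₁.1 + n * v₂.1) ^ 2 + ((m : ℝ) * v₁.2 + n * v₂.2) ^ 2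

lemma Nf_nonneg (m n : ℤ) : 0 ≤ Nf v₁ v₂ m n := by
  unfold Nf; positivity

lemma latticeSet_nonempty :
    {x : ℝ | ∃ m n : ℤ, ¬(m = 0 ∧ n = 0) ∧ x = eNorm (m • v₁ + n • v₂)}.Nonempty :=
  ⟨eNorm ((1:ℤ) • v₁ + (0:ℤ) • v₂), 1, 0, by simp, rfl⟩

lemma latticeSet_bddBelow :
    BddBelow {x : ℝ | ∃ m n : ℤ, ¬(m = 0 ∧ n = 0) ∧ x = eNorm (m • v₁ + n • v₂)} := by
  refine ⟨0, fun x hx => ?_⟩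
  obtain ⟨m, n, -, rfl⟩ := hx
  exact Real.sqrt_nonneg _

lemma lambdaOne_nonneg : 0 ≤ lambdaOne v₁ v₂ := by
  apply Real.sInf_nonneg
  rintro x ⟨m, n, -, rfl⟩
  exact Real.sqrt_nonneg _

lemma lambdaOne_le (m n : ℤ) (h : ¬(m = 0 ∧ n = 0)) :
    lambdaOne v₁ v₂ ≤ Real.sqrt (Nf v₁ v₂ m n) := by
  unfold Nf
  rw [← eNorm_coords]
  exact csInf_le (latticeSet_bddBelow v₁ v₂) ⟨m, n, h, rfl⟩

lemma lambdaOne_sq_le (m n : ℤ) (h : ¬(m = 0 ∧ n = 0)) :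
    (lambdaOne v₁ v₂) ^ 2 ≤ Nf v₁ v₂ m n := by
  have h1 := lambdaOne_le v₁ v₂ m n h
  have h2 := lambdaOne_nonneg v₁ v₂
  have h3 : Real.sqrt (Nf v₁ v₂ m n) ^ 2 = Nf v₁ v₂ m n :=
    Real.sq_sqrt (Nf_nonneg v₁ v₂ m n)
  nlinarith [Real.sqrt_nonneg (Nf v₁ v₂ m n)]

set_option maxHeartbeats 1000000 in
theorem hermite_bound (hdet : |v₁.1 * v₂.2 - v₁.2 * v₂.1| = 1) :
    (lambdaOne v₁ v₂) ^ 2 ≤ 2 / Real.sqrt 3 := by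
  by_contra hcon
  push_neg at hcon
  set lam := lambdaOne v₁ v₂ with hlam
  set L : ℝ := lam ^ 2 with hLdef
  have hL1 : 1 < L := lt_trans one_lt_gamma hcon
  have hL2 : 4 / 3 < L ^ 2 := by
    have := pow_lt_pow_left₀ hcon (le_of_lt (lt_trans one_pos one_lt_gamma)) (by norm_num : 2 ≠ 0)
    rwa [gamma_sq] at this
  have hlam_nonneg : 0 ≤ lam := lambdaOne_nonneg v₁ v₂
  have hlam1 : 1 < lam := by
    by_contra h
    push_neg at h
    have := pow_le_one₀ hlam_nonneg h (n := 2)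
    rw [← hLdef] at this
    linarith
  have hD2 : (v₁.1 * v₂.2 - v₁.2 * v₂.1) ^ 2 = 1 := by
    rw [← sq_abs, hdet]; norm_num
  -- find a near-shortest vector
  set η : ℝ := 1 / (2 * lam + 1) with hη
  have hηpos : 0 < η := by positivity
  obtain ⟨x, hxS, hxlt⟩ :=
    Real.lt_sInf_add_pos (latticeSet_nonempty v₁ v₂) hηpos
  obtain ⟨m, n, hmn0, rfl⟩ := hxS
  rw [eNorm_coords] at hxlt
  have hxlt' : Real.sqrt (Nf v₁ v₂ m n) < lam + η := hxlt
  have hA2 : Nf v₁ v₂ m n < L + 1 := by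
    have hs : Real.sqrt (Nf v₁ v₂ m n) ^ 2 = Nf v₁ v₂ m n :=
      Real.sq_sqrt (Nf_nonneg v₁ v₂ m n)
    have hη1 : η * (2 * lam + 1) = 1 := by
      rw [hη]; field_simp
    have hηle1 : η ≤ 1 := by
      rw [hη, div_le_one (by linarith)]
      linarith
    have hq : Nf v₁ v₂ m n < (lam + η) ^ 2 := by
      rw [← hs]
      exact pow_lt_pow_left₀ hxlt' (Real.sqrt_nonneg _) (by norm_num)
    have h2 : (lam + η) ^ 2 = L + η * (2 * lam + η) := by rw [hLdef]; ring
    have h3 : η * (2 * lam + η) ≤ η * (2 * lam + 1) :=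
      mul_le_mul_of_nonneg_left (by linarith) hηpos.le
    linarith
  have hA1 : L ≤ Nf v₁ v₂ m n := lambdaOne_sq_le v₁ v₂ m n hmn0
  -- gcd is 1
  set d : ℕ := Int.gcd m n with hd
  have hd0 : d ≠ 0 := fun h => hmn0 (Int.gcd_eq_zero_iff.mp h)
  obtain ⟨m', hm'⟩ : (d : ℤ) ∣ m := Int.gcd_dvd_left _ _
  obtain ⟨n', hn'⟩ : (d : ℤ) ∣ n := Int.gcd_dvd_right _ _
  have hm'n' : ¬(m' = 0 ∧ n' = 0) := by
    rintro ⟨rfl, rfl⟩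
    exact hmn0 ⟨by simp [hm'], by simp [hn']⟩
  have hscale : Nf v₁ v₂ m n = (d : ℝ) ^ 2 * Nf v₁ v₂ m' n' := by
    unfold Nf
    rw [hm', hn']
    push_cast
    ring
  have hN' : L ≤ Nf v₁ v₂ m' n' := lambdaOne_sq_le v₁ v₂ m' n' hm'n'
  have hd1 : d = 1 := by
    by_contra hdne
    have hd2 : 2 ≤ d := by omega
    have hd2R : (2 : ℝ) ≤ (d : ℝ) := by exact_mod_cast hd2
    have h4 : (4 : ℝ) ≤ (d : ℝ) ^ 2 := by
      have : (2:ℝ) * 2 ≤ (d:ℝ) * (d:ℝ) := mul_le_mul hd2R hd2R (by norm_num) (by linarith)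
      calc (4:ℝ) = 2 * 2 := by norm_num
        _ ≤ (d:ℝ) * (d:ℝ) := this
        _ = (d:ℝ) ^ 2 := by ring
    have h5 : 4 * L ≤ (d : ℝ) ^ 2 * Nf v₁ v₂ m' n' :=
      mul_le_mul h4 hN' (by linarith) (by linarith)
    linarith
  -- Bezout: complete to a basis
  obtain ⟨u, v, huv⟩ := Int.isCoprime_iff_gcd_eq_one.mpr hd1
  set p : ℤ := -v with hp
  set q : ℤ := u with hq
  have hdet2 : m * q - n * p = 1 := by rw [hp, hq]; linarith [huv]
  -- reduction step
  set A : ℝ := Nf v₁ v₂ m n with hA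
  set W1 : ℝ := (m : ℝ) * v₁.1 + n * v₂.1 with hW1
  set W2 : ℝ := (m : ℝ) * v₁.2 + n * v₂.2 with hW2
  set U1 : ℝ := (p : ℝ) * v₁.1 + q * v₂.1 with hU1
  set U2 : ℝ := (p : ℝ) * v₁.2 + q * v₂.2 with hU2
  set B : ℝ := W1 * U1 + W2 * U2 with hB
  have hApos : 0 < A := lt_of_lt_of_le (by linarith) hA1
  set k : ℤ := -round (B / A) with hk
  set B' : ℝ := B + (k : ℝ) * A with hB'
  have hB'le : |B'| ≤ A / 2 := by
    have h1 : |B / A - round (B / A)| ≤ 1 / 2 := abs_sub_round (B / A)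
    have h2 : B' = A * (B / A - round (B / A)) := by
      rw [hB', hk]
      push_cast
      field_simp
      ring
    rw [h2, abs_mul, abs_of_pos hApos]
    calc A * |B / A - (round (B / A) : ℝ)| ≤ A * (1 / 2) :=
          mul_le_mul_of_nonneg_left h1 hApos.le
      _ = A / 2 := by ring
  set p' : ℤ := p + k * m with hp'
  set q' : ℤ := q + k * n with hq'
  have hp'q' : ¬(p' = 0 ∧ q' = 0) := by
    rintro ⟨h1, h2⟩
    have : m * q' - n * p' = 1 := by rw [hp', hq']; linear_combination hdet2
    rw [h1, h2] at this
    simp at this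
  set C : ℝ := Nf v₁ v₂ p' q' with hC
  have hCge : L ≤ C := lambdaOne_sq_le v₁ v₂ p' q' hp'q'
  -- Lagrange identity
  have hdet2R : (m : ℝ) * q' - n * p' = 1 := by
    have : m * q' - n * p' = 1 := by rw [hp', hq']; linear_combination hdet2
    exact_mod_cast this
  set U1' : ℝ := (p' : ℝ) * v₁.1 + q' * v₂.1 with hU1'
  set U2' : ℝ := (p' : ℝ) * v₁.2 + q' * v₂.2 with hU2'
  have hCeq : C = U1' ^ 2 + U2' ^ 2 := by rw [hC, hU1', hU2']; rfl
  have hAeq : A = W1 ^ 2 + W2 ^ 2 := by rw [hA, hW1, hW2]; rfl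
  have hU1'eq : U1' = U1 + (k : ℝ) * W1 := by
    rw [hU1', hU1, hW1, hp', hq']; push_cast; ring
  have hU2'eq : U2' = U2 + (k : ℝ) * W2 := by
    rw [hU2', hU2, hW2, hp', hq']; push_cast; ring
  have hB'eq : B' = W1 * U1' + W2 * U2' := by
    rw [hB', hB, hU1'eq, hU2'eq, hAeq]; ring
  have hdetWU : W1 * U2' - W2 * U1' = v₁.1 * v₂.2 - v₁.2 * v₂.1 := by
    rw [hW1, hW2, hU1', hU2']
    linear_combination (v₁.1 * v₂.2 - v₁.2 * v₂.1) * hdet2R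
  have key : A * C - B' ^ 2 = 1 := by
    have lag : (W1 ^ 2 + W2 ^ 2) * (U1' ^ 2 + U2' ^ 2) - (W1 * U1' + W2 * U2') ^ 2
        = (W1 * U2' - W2 * U1') ^ 2 := by ring
    rw [hAeq, hCeq, hB'eq, lag, hdetWU, hD2]
  -- conclude
  have hBsq : B' ^ 2 ≤ A ^ 2 / 4 := by
    calc B' ^ 2 = |B'| ^ 2 := (sq_abs B').symm
      _ ≤ (A / 2) ^ 2 := pow_le_pow_left₀ (abs_nonneg B') hB'le 2
      _ = A ^ 2 / 4 := by ring
  have hAL : A * L ≤ A * C := mul_le_mul_of_nonneg_left hCge (le_of_lt hApos)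
  have hprod : 0 ≤ (A - L) * (3 * L - A) :=
    mul_nonneg (by linarith) (by linarith)
  have hexp : (A - L) * (3 * L - A) = 4 * (A * L) - A ^ 2 - 3 * L ^ 2 := by ring
  rw [hexp] at hprod
  exact final_aux A C L (B' ^ 2) key hBsq hAL hprod hL2

end Part1

section Part2

lemma eisenstein_pos (m n : ℤ) (h : ¬(m = 0 ∧ n = 0)) : 1 ≤ m ^ 2 + m * n + n ^ 2 := by
  have h4 : 0 < (2 * m + n) ^ 2 + 3 * n ^ 2 := by
    rcases eq_or_ne n 0 with rfl | hn
    · have hm : m ≠ 0 := fun hm => h ⟨hm, rfl⟩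
      have : 0 < (2 * m) ^ 2 := by positivity
      nlinarith
    · have : 0 < n ^ 2 := by positivity
      nlinarith [sq_nonneg (2 * m + n)]
  nlinarith

lemma eisenstein_lambda :
    (lambdaOne (Real.sqrt (2 / Real.sqrt 3) • ((1:ℝ), (0:ℝ)))
        (Real.sqrt (2 / Real.sqrt 3) • ((1 / 2 : ℝ), Real.sqrt 3 / 2))) ^ 2 =
      2 / Real.sqrt 3 := by
  set s : ℝ := Real.sqrt (2 / Real.sqrt 3) with hs
  have hγ : (0:ℝ) ≤ 2 / Real.sqrt 3 := le_of_lt (by positivity)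
  have hs0 : 0 ≤ s := Real.sqrt_nonneg _
  have hs2 : s ^ 2 = 2 / Real.sqrt 3 := Real.sq_sqrt hγ
  have h3 : Real.sqrt 3 ^ 2 = 3 := Real.sq_sqrt (by norm_num)
  set V1 : ℝ × ℝ := s • ((1:ℝ), (0:ℝ)) with hV1
  set V2 : ℝ × ℝ := s • ((1 / 2 : ℝ), Real.sqrt 3 / 2) with hV2
  have hval : ∀ m n : ℤ, eNorm (m • V1 + n • V2)
      = s * Real.sqrt ((m : ℝ) ^ 2 + m * n + n ^ 2) := by
    intro m n
    have hc : m • V1 + n • V2 =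
        (((m : ℝ) * (V1.1) + n * (V2.1)), ((m : ℝ) * (V1.2) + n * (V2.2))) :=
      zsmul_coords m n V1 V2
    rw [hc, eNorm]
    have hcoord1 : V1.1 = s := by simp [hV1]
    have hcoord2 : V1.2 = 0 := by simp [hV1]
    have hcoord3 : V2.1 = s * (1/2) := by simp [hV2]
    have hcoord4 : V2.2 = s * (Real.sqrt 3 / 2) := by simp [hV2]
    have heq : ((m : ℝ) * V1.1 + n * V2.1) ^ 2 + ((m : ℝ) * V1.2 + n * V2.2) ^ 2
        = s ^ 2 * ((m : ℝ) ^ 2 + m * n + n ^ 2) := by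
      rw [hcoord1, hcoord2, hcoord3, hcoord4]
      linear_combination ((n:ℝ)^2 * s^2 / 4) * h3
    rw [heq, Real.sqrt_mul (sq_nonneg s), Real.sqrt_sq hs0]
  have hKnn : ∀ m n : ℤ, (0:ℝ) ≤ (m : ℝ) ^ 2 + m * n + n ^ 2 := by
    intro m n
    nlinarith [sq_nonneg ((m:ℝ) + n), sq_nonneg (m:ℝ), sq_nonneg (n:ℝ)]
  have hlb : ∀ x ∈ {x : ℝ | ∃ m n : ℤ, ¬(m = 0 ∧ n = 0) ∧ x = eNorm (m • V1 + n • V2)},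
      s ≤ x := by
    rintro x ⟨m, n, hmn, rfl⟩
    rw [hval m n]
    have h1 : (1:ℝ) ≤ (m : ℝ) ^ 2 + m * n + n ^ 2 := by
      exact_mod_cast eisenstein_pos m n hmn
    have : (1:ℝ) ≤ Real.sqrt ((m : ℝ) ^ 2 + m * n + n ^ 2) := by
      rw [show (1:ℝ) = Real.sqrt 1 by simp]
      exact Real.sqrt_le_sqrt h1
    nlinarith
  have hmem : s ∈ {x : ℝ | ∃ m n : ℤ, ¬(m = 0 ∧ n = 0) ∧ x = eNorm (m • V1 + n • V2)} := by
    refine ⟨1, 0, by simp, ?_⟩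
    rw [hval 1 0]
    norm_num
  have hInf : lambdaOne V1 V2 = s := by
    unfold lambdaOne
    exact le_antisymm (csInf_le ⟨s, hlb⟩ hmem) (le_csInf ⟨s, hmem⟩ hlb)
  rw [hInf, hs2]

end Part2

/-- For any lattice of unit covolume in the plane, `λ₁(L)² ≤ 2/√3` (the Hermite
constant `γ₂`), with equality for the rescaled Eisenstein lattice
`ℤ·1 + ℤ·e^{iπ/3}`. -/
theorem hermite_constant_two :
    (∀ v₁ v₂ : ℝ × ℝ, |v₁.1 * v₂.2 - v₁.2 * v₂.1| = 1 →
      (lambdaOne v₁ v₂) ^ 2 ≤ 2 / Real.sqrt 3) ∧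
    (lambdaOne (Real.sqrt (2 / Real.sqrt 3) • ((1:ℝ), (0:ℝ)))
        (Real.sqrt (2 / Real.sqrt 3) • ((1 / 2 : ℝ), Real.sqrt 3 / 2))) ^ 2 =
      2 / Real.sqrt 3 :=
  ⟨hermite_bound, eisenstein_lambda⟩
end
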